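/- Let a > 0 and m < 0 be real constants and for β ∈ ℝ define G_β(x) = β·sin(πx)·χ_{[−3,−1]}(x). Consider the system b'(t) = sin(θ(t)) − 1, θ'(t) = −(a/(2|m|))·G_β(b(t))·cos²(θ(t)) + (a²/(2|m|))·sin(θ(t)) with initial conditions b(t₁) = −1, θ(t₁) = 0. Then there exists ε > 0 such that for all β with 0 < β < ε, the solution (b(t), θ(t)) satisfies: there exists t₂ > t₁ with b(t₂) = −3 and θ(t₂) < 0. -/

import Mathlib

open Real

lemma abs_sin_sub_sin_le (x y : ℝ) : |sin x - sin y| ≤ |x - y| := by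
  rw [Real.sin_sub_sin, abs_mul, abs_mul, abs_two]
  have h1 := Real.abs_sin_le_abs (x := (x - y) / 2)
  have h2 := Real.abs_cos_le_one ((x + y) / 2)
  have h3 : |(x - y) / 2| = |x - y| / 2 := by rw [abs_div, abs_two]
  nlinarith [abs_nonneg (sin ((x - y) / 2)), abs_nonneg (x - y)]

lemma abs_sin_sub_self_le {x : ℝ} (h : |x| ≤ 1) : |sin x - x| ≤ x ^ 2 := by
  have key : ∀ y : ℝ, 0 < y → y ≤ 1 → |sin y - y| ≤ y ^ 2 := by
    intro y hy hy1
    have h1 : sin y < y := Real.sin_lt hy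
    have h2 : y - y ^ 3 / 4 < sin y := by
      have := Real.sin_gt_sub_cube hy; have : 0 < y ^ 3 := by positivity
      linarith
    rw [abs_of_nonpos (by linarith)]
    nlinarith
  rcases lt_trichotomy x 0 with hx | hx | hx
  · have := key (-x) (by linarith) (by rwa [abs_of_neg hx] at h)
    rw [Real.sin_neg] at this
    calc |sin x - x| = |-sin x - -x| := by rw [← abs_neg]; ring_nf
    _ ≤ (-x) ^ 2 := this
    _ = x ^ 2 := by ring
  · simp [hx]
  · exact key x hx (by rwa [abs_of_pos hx] at h)

lemma sin_pulse (x : ℝ) : sin (π * (-1 - x)) = sin (π * x) := by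
  have : π * (-1 - x) = -(π * x + π) := by ring
  rw [this, Real.sin_neg, Real.sin_add_pi, neg_neg]

lemma pulse_antideriv (k t₁ s : ℝ) :
    HasDerivAt (fun s => exp (-k * (s - t₁)) *
        (-(k * sin (π * (s - t₁))) - π * cos (π * (s - t₁))) / (k ^ 2 + π ^ 2))
      (exp (-k * (s - t₁)) * sin (π * (s - t₁))) s := by
  have hlin : HasDerivAt (fun s : ℝ => s - t₁) 1 s := (hasDerivAt_id s).sub_const t₁
  have hexp : HasDerivAt (fun s : ℝ => exp (-k * (s - t₁))) (exp (-k * (s - t₁)) * -k) s := by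
    have := (hlin.const_mul (-k)).exp
    simpa using this
  have hsin : HasDerivAt (fun s : ℝ => sin (π * (s - t₁))) (cos (π * (s - t₁)) * π) s := by
    have := (hlin.const_mul π).sin
    simpa using this
  have hcos : HasDerivAt (fun s : ℝ => cos (π * (s - t₁))) (-sin (π * (s - t₁)) * π) s := by
    have := (hlin.const_mul π).cos
    simpa using this
  have hnum : HasDerivAt
      (fun s => exp (-k * (s - t₁)) * (-(k * sin (π * (s - t₁))) - π * cos (π * (s - t₁))))
      (exp (-k * (s - t₁)) * -k * (-(k * sin (π * (s - t₁))) - π * cos (π * (s - t₁))) +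
        exp (-k * (s - t₁)) * (-(k * (cos (π * (s - t₁)) * π)) - π * (-sin (π * (s - t₁)) * π))) s :=
    hexp.mul (((hsin.const_mul k).neg).sub (hcos.const_mul π))
  have hπ : (0:ℝ) < k ^ 2 + π ^ 2 := by positivity
  have := hnum.div_const (k ^ 2 + π ^ 2)
  exact this.congr_deriv (by rw [div_eq_iff hπ.ne']; ring)

lemma pulse_integral (k t₁ : ℝ) :
    ∫ s in t₁..(t₁ + 2), exp (-k * (s - t₁)) * sin (π * (s - t₁)) =
      π * (1 - exp (-(2 * k))) / (k ^ 2 + π ^ 2) := by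
  rw [intervalIntegral.integral_eq_sub_of_hasDerivAt
      (fun s _ => pulse_antideriv k t₁ s)
      (by apply Continuous.intervalIntegrable; continuity)]
  have h2 : t₁ + 2 - t₁ = 2 := by ring
  rw [h2]
  have hs2 : sin (π * 2) = 0 := by rw [mul_comm]; exact Real.sin_two_pi
  have hc2 : cos (π * 2) = 1 := by rw [mul_comm]; exact Real.cos_two_pi
  rw [hs2, hc2]
  have : -k * 2 = -(2 * k) := by ring
  rw [this]
  norm_num
  field_simp
  ring

set_option maxHeartbeats 2000000 in
/-- A particle of charge `a > 0` and negative bare mass `m < 0` struck by a small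
incoming radiation pulse `G_β(x) = β sin(πx) χ_{[−3,−1]}(x)`: for all sufficiently small
`β > 0`, the solution of `b' = sin θ − 1`,
`θ' = −(a/(2|m|)) G_β(b) cos²θ + (a²/(2|m|)) sin θ` with `b(t₁) = −1`, `θ(t₁) = 0`
exits the pulse with strictly negative `θ`: there is `t₂ > t₁` with `b(t₂) = −3` and
`θ(t₂) < 0`. -/
theorem particle_exits_pulse_with_negative_theta
    (a m t₁ : ℝ) (ha : 0 < a) (hm : m < 0) :
    ∃ ε > (0 : ℝ), ∀ β : ℝ, 0 < β → β < ε →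
      ∀ b θ : ℝ → ℝ,
        b t₁ = -1 → θ t₁ = 0 →
        (∀ t ∈ Set.Ici t₁,
          HasDerivAt b (sin (θ t) - 1) t ∧
          HasDerivAt θ
            (-(a / (2 * |m|)) *
                (if b t ∈ Set.Icc (-3 : ℝ) (-1) then β * sin (π * b t) else 0) *
                cos (θ t) ^ 2
              + (a ^ 2 / (2 * |m|)) * sin (θ t)) t) →
        ∃ t₂ > t₁, b t₂ = -3 ∧ θ t₂ < 0 := by
  have hm' : (0:ℝ) < |m| := abs_pos.mpr hm.ne
  set c := a / (2 * |m|) with hc_def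
  set k := a ^ 2 / (2 * |m|) with hk_def
  have hc : 0 < c := by rw [hc_def]; positivity
  have hk : 0 < k := by rw [hk_def]; positivity
  set C := c / k * (exp (4 * k) - 1) with hC_def
  have hexp1 : (1:ℝ) < exp (4 * k) := by
    rw [← Real.exp_zero]; exact Real.exp_lt_exp.mpr (by positivity)
  have hC : 0 < C := by
    rw [hC_def]; apply mul_pos (by positivity); linarith
  set J := π * (1 - exp (-(2 * k))) / (k ^ 2 + π ^ 2) with hJ_def
  have hJ : 0 < J := by
    have h1 : exp (-(2 * k)) < 1 := by
      rw [← Real.exp_zero]; exact Real.exp_lt_exp.mpr (by linarith)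
    rw [hJ_def]
    have := Real.pi_pos
    apply div_pos (by nlinarith) (by positivity)
  set D := 4 * C ^ 2 + 16 * π * C + 4 * C with hD_def
  have hD : 0 < D := by rw [hD_def]; have := Real.pi_pos; positivity
  clear_value c k C J D
  refine ⟨min 1 (min (J / (2 * (D + 1))) (min (c * J / (16 * k * C ^ 2 + 1)) (1 / (8 * C + 1)))),
    by positivity, ?_⟩
  intro β hβ0 hβε b θ hb1 hθ1 hode
  -- unpack the smallness of β
  have hβ1 : β < 1 := lt_of_lt_of_le hβε (min_le_left _ _)
  have hβJ : β * (D + 1) < J / 2 := by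
    have h := lt_of_lt_of_le hβε ((min_le_right _ _).trans (min_le_left _ _))
    have h2 := (lt_div_iff₀ (by positivity : (0:ℝ) < 2 * (D + 1))).mp h
    have h3 : β * (2 * (D + 1)) = 2 * (β * (D + 1)) := by ring
    linarith
  have hβk : β * (16 * k * C ^ 2 + 1) < c * J := by
    have h := lt_of_lt_of_le hβε ((min_le_right _ _).trans ((min_le_right _ _).trans (min_le_left _ _)))
    have := (lt_div_iff₀ (by positivity : (0:ℝ) < 16 * k * C ^ 2 + 1)).mp h
    linarith
  have hCβ : C * β < 1 / 8 := by
    have h := lt_of_lt_of_le hβε ((min_le_right _ _).trans ((min_le_right _ _).trans (min_le_right _ _)))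
    have := (lt_div_iff₀ (by positivity : (0:ℝ) < 8 * C + 1)).mp h
    nlinarith
  have hCβ0 : 0 < C * β := mul_pos hC hβ0
  set T := t₁ + 4 with hT_def
  clear_value T
  have ht₁T : t₁ ≤ T := by rw [hT_def]; linarith
  -- continuity
  have hbcont : ContinuousOn b (Set.Icc t₁ T) := fun t ht =>
    ((hode t ht.1).1.continuousAt).continuousWithinAt
  have hθcont : ContinuousOn θ (Set.Icc t₁ T) := fun t ht =>
    ((hode t ht.1).2.continuousAt).continuousWithinAt
  -- Gronwall bound for θ
  have hθb : ∀ t ∈ Set.Icc t₁ T, |θ t| ≤ C * β := by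
    have hbound : ∀ x ∈ Set.Ico t₁ T,
        ‖(-c * (if b x ∈ Set.Icc (-3 : ℝ) (-1) then β * sin (π * b x) else 0)) *
          cos (θ x) ^ 2 + k * sin (θ x)‖ ≤ k * ‖θ x‖ + c * β := by
      intro x hx
      rw [Real.norm_eq_abs, Real.norm_eq_abs]
      have hG : |(if b x ∈ Set.Icc (-3 : ℝ) (-1) then β * sin (π * b x) else 0)| ≤ β := by
        by_cases hmem : b x ∈ Set.Icc (-3 : ℝ) (-1)
        · rw [if_pos hmem, abs_mul, abs_of_pos hβ0]
          nlinarith [Real.abs_sin_le_one (π * b x), abs_nonneg (sin (π * b x))]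
        · rw [if_neg hmem, abs_zero]; exact hβ0.le
      have h4 : |(-c * (if b x ∈ Set.Icc (-3 : ℝ) (-1) then β * sin (π * b x) else 0)) *
          cos (θ x) ^ 2| ≤ c * β := by
        rw [abs_mul, abs_mul, abs_neg, abs_of_pos hc, abs_of_nonneg (sq_nonneg (cos (θ x)))]
        have hcos : cos (θ x) ^ 2 ≤ 1 := by
          nlinarith [Real.abs_cos_le_one (θ x), abs_nonneg (cos (θ x)), sq_abs (cos (θ x))]
        calc c * |if b x ∈ Set.Icc (-3 : ℝ) (-1) then β * sin (π * b x) else 0| *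
            cos (θ x) ^ 2 ≤ c * β * 1 :=
            mul_le_mul (mul_le_mul_of_nonneg_left hG hc.le) hcos (sq_nonneg _) (by positivity)
          _ = c * β := mul_one _
      have h5 : |k * sin (θ x)| ≤ k * |θ x| := by
        rw [abs_mul, abs_of_pos hk]
        exact mul_le_mul_of_nonneg_left (Real.abs_sin_le_abs) hk.le
      calc |(-c * (if b x ∈ Set.Icc (-3 : ℝ) (-1) then β * sin (π * b x) else 0)) *
          cos (θ x) ^ 2 + k * sin (θ x)|
          ≤ |(-c * (if b x ∈ Set.Icc (-3 : ℝ) (-1) then β * sin (π * b x) else 0)) *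
          cos (θ x) ^ 2| + |k * sin (θ x)| := abs_add_le _ _
        _ ≤ c * β + k * |θ x| := add_le_add h4 h5
        _ = k * |θ x| + c * β := by ring
    have key := norm_le_gronwallBound_of_norm_deriv_right_le (a := t₁) (b := T)
      (f := θ) (δ := 0) (K := k) (ε := c * β)
      (f' := fun t => -c *
          (if b t ∈ Set.Icc (-3 : ℝ) (-1) then β * sin (π * b t) else 0) *
          cos (θ t) ^ 2 + k * sin (θ t))
      hθcont
      (fun x hx => ((hode x hx.1).2).hasDerivWithinAt)
      (by simp [hθ1])
      hbound
    intro t ht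
    have h1 := key t ht
    rw [Real.norm_eq_abs] at h1
    refine h1.trans ?_
    rw [gronwallBound_of_K_ne_0 hk.ne']
    show 0 * exp (k * (t - t₁)) + c * β / k * (exp (k * (t - t₁)) - 1) ≤ C * β
    have h2 : exp (k * (t - t₁)) ≤ exp (4 * k) := by
      apply Real.exp_le_exp.mpr
      have ht4 : t ≤ t₁ + 4 := hT_def ▸ ht.2
      nlinarith [ht.1, hk.le]
    have h3 : (1:ℝ) ≤ exp (k * (t - t₁)) := by
      rw [← Real.exp_zero]
      apply Real.exp_le_exp.mpr
      nlinarith [ht.1]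
    have e1 : (0:ℝ) * exp (k * (t - t₁)) + c * β / k * (exp (k * (t - t₁)) - 1)
        = c / k * β * (exp (k * (t - t₁)) - 1) := by ring
    rw [e1, hC_def]
    have hck : 0 < c / k := div_pos hc hk
    nlinarith [mul_le_mul_of_nonneg_left h2 (mul_pos hck hβ0).le]
  -- Gronwall bound for b (comparison with straight-line motion)
  have hfb : ∀ t ∈ Set.Icc t₁ T, |b t + (t - t₁) + 1| ≤ C * β * (t - t₁) := by
    have hfc : ContinuousOn (fun t => b t + (t - t₁) + 1) (Set.Icc t₁ T) := by
      apply ContinuousOn.add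
      apply ContinuousOn.add hbcont
      · exact (continuous_id.sub continuous_const).continuousOn
      · exact continuousOn_const
    have hbound : ∀ x ∈ Set.Ico t₁ T, ‖sin (θ x)‖ ≤ 0 * ‖(fun t => b t + (t - t₁) + 1) x‖ + C * β := by
      intro x hx
      rw [Real.norm_eq_abs, zero_mul, zero_add]
      exact Real.abs_sin_le_abs.trans (hθb x ⟨hx.1, hx.2.le⟩)
    have hderiv : ∀ x ∈ Set.Ico t₁ T,
        HasDerivWithinAt (fun t => b t + (t - t₁) + 1) (sin (θ x)) (Set.Ici x) x := by
      intro x hx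
      have h := ((hode x hx.1).1.add ((hasDerivAt_id x).sub_const t₁)).add_const 1
      have he : sin (θ x) - 1 + 1 = sin (θ x) := by ring
      exact (he ▸ h).hasDerivWithinAt
    have key := norm_le_gronwallBound_of_norm_deriv_right_le (a := t₁) (b := T)
      (f := fun t => b t + (t - t₁) + 1) (δ := 0) (K := 0) (ε := C * β)
      (f' := fun x => sin (θ x)) hfc hderiv (by simp [hb1]) hbound
    intro t ht
    have h1 := key t ht
    rw [Real.norm_eq_abs, gronwallBound_K0] at h1
    simpa using h1
  -- the particle reaches b = -3
  have hbT : b T < -3 := by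
    have h1 := hfb T ⟨ht₁T, le_refl T⟩
    have h2 : T - t₁ = 4 := by rw [hT_def]; ring
    rw [h2] at h1
    have := abs_le.mp h1
    nlinarith [this.1, this.2]
  have hanti : StrictAntiOn b (Set.Icc t₁ T) := by
    apply strictAntiOn_of_deriv_neg (convex_Icc _ _) hbcont
    intro x hx
    rw [interior_Icc] at hx
    rw [(hode x hx.1.le).1.deriv]
    have h1 := hθb x ⟨hx.1.le, hx.2.le⟩
    have h2 : sin (θ x) ≤ |θ x| := (le_abs_self _).trans Real.abs_sin_le_abs
    linarith
  obtain ⟨t₂, ht₂mem, hbt₂⟩ := intermediate_value_Icc' ht₁T hbcont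
    ⟨hbT.le, by rw [hb1]; norm_num⟩
  have ht₂1 : t₁ < t₂ := by
    rcases eq_or_lt_of_le ht₂mem.1 with h | h
    · exfalso; rw [← h, hb1] at hbt₂; norm_num at hbt₂
    · exact h
  have hsub : Set.Icc t₁ t₂ ⊆ Set.Icc t₁ T := Set.Icc_subset_Icc le_rfl ht₂mem.2
  have hbmem : ∀ s ∈ Set.Icc t₁ t₂, b s ∈ Set.Icc (-3 : ℝ) (-1) := by
    intro s hs
    constructor
    · rw [← hbt₂]
      exact hanti.antitoneOn (hsub hs) ht₂mem hs.2
    · rw [← hb1]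
      exact hanti.antitoneOn ⟨le_rfl, ht₁T⟩ (hsub hs) hs.1
  have ht₂4 : t₂ - t₁ ≤ 4 := by
    have := ht₂mem.2; rw [hT_def] at this; linarith
  have ht₂2 : |t₂ - t₁ - 2| ≤ 4 * (C * β) := by
    have h1 := hfb t₂ ht₂mem
    rw [hbt₂] at h1
    have he : -3 + (t₂ - t₁) + 1 = t₂ - t₁ - 2 := by ring
    rw [he] at h1
    refine h1.trans ?_
    nlinarith [hCβ0.le]
  -- the weighted integral argument
  have hUI : Set.uIcc t₁ t₂ = Set.Icc t₁ t₂ := Set.uIcc_of_le ht₂1.le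
  have hUIoc : Set.uIoc t₁ t₂ = Set.Ioc t₁ t₂ := Set.uIoc_of_le ht₂1.le
  have hbcont2 : ContinuousOn b (Set.Icc t₁ t₂) := hbcont.mono hsub
  have hθcont2 : ContinuousOn θ (Set.Icc t₁ t₂) := hθcont.mono hsub
  have hKcont : Continuous (fun s : ℝ => exp (-k * (s - t₁))) :=
    Real.continuous_exp.comp (continuous_const.mul (continuous_id.sub continuous_const))
  have hKle : ∀ s, t₁ ≤ s → exp (-k * (s - t₁)) ≤ 1 := by
    intro s hs
    rw [← Real.exp_zero]
    apply Real.exp_le_exp.mpr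
    nlinarith only [mul_nonneg hk.le (sub_nonneg.mpr hs)]
  have hθ2 : ∀ s ∈ Set.Icc t₁ t₂, |θ s| ≤ C * β := fun s hs => hθb s (hsub hs)
  have hgderiv : ∀ s ∈ Set.uIcc t₁ t₂,
      HasDerivAt (fun t => exp (-k * (t - t₁)) * θ t)
        (exp (-k * (s - t₁)) *
          (-(c * β) * (sin (π * b s) * cos (θ s) ^ 2) + k * (sin (θ s) - θ s))) s := by
    rw [hUI]
    intro s hs
    have hθ' := (hode s hs.1).2
    rw [if_pos (hbmem s hs)] at hθ'
    have hK : HasDerivAt (fun t : ℝ => exp (-k * (t - t₁))) (exp (-k * (s - t₁)) * -k) s := by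
      have := (((hasDerivAt_id s).sub_const t₁).const_mul (-k)).exp
      simpa using this
    have hprod := hK.mul hθ'
    exact hprod.congr_deriv (by ring)
  have hsinb : ContinuousOn (fun s => sin (π * b s)) (Set.Icc t₁ t₂) :=
    Real.continuous_sin.comp_continuousOn (continuousOn_const.mul hbcont2)
  have hcosθ : ContinuousOn (fun s => cos (θ s) ^ 2) (Set.Icc t₁ t₂) :=
    (Real.continuous_cos.comp_continuousOn hθcont2).pow 2
  have hcont1 : ContinuousOn (fun s => exp (-k * (s - t₁)) * (sin (π * b s) * cos (θ s) ^ 2))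
      (Set.Icc t₁ t₂) := (hKcont.continuousOn).mul (hsinb.mul hcosθ)
  have hcont2 : ContinuousOn (fun s => exp (-k * (s - t₁)) * (sin (θ s) - θ s))
      (Set.Icc t₁ t₂) := (hKcont.continuousOn).mul
      ((Real.continuous_sin.comp_continuousOn hθcont2).sub hθcont2)
  have hint1 : IntervalIntegrable (fun s => exp (-k * (s - t₁)) * (sin (π * b s) * cos (θ s) ^ 2))
      MeasureTheory.volume t₁ t₂ := (hUI ▸ hcont1).intervalIntegrable
  have hint2 : IntervalIntegrable (fun s => exp (-k * (s - t₁)) * (sin (θ s) - θ s))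
      MeasureTheory.volume t₁ t₂ := (hUI ▸ hcont2).intervalIntegrable
  have hψcont : Continuous (fun s : ℝ => exp (-k * (s - t₁)) * sin (π * (s - t₁))) :=
    hKcont.mul (Real.continuous_sin.comp
      (continuous_const.mul (continuous_id.sub continuous_const)))
  set M := (∫ s in t₁..t₂, exp (-k * (s - t₁)) * (sin (π * b s) * cos (θ s) ^ 2) : ℝ)
    with hM_def
  set S := (∫ s in t₁..t₂, exp (-k * (s - t₁)) * (sin (θ s) - θ s) : ℝ) with hS_def
  -- fundamental theorem of calculus for the weighted θ
  have hFTC : exp (-k * (t₂ - t₁)) * θ t₂ = -(c * β) * M + k * S := by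
    have h0 : (∫ s in t₁..t₂, exp (-k * (s - t₁)) *
          (-(c * β) * (sin (π * b s) * cos (θ s) ^ 2) + k * (sin (θ s) - θ s)))
        = exp (-k * (t₂ - t₁)) * θ t₂ := by
      rw [intervalIntegral.integral_eq_sub_of_hasDerivAt hgderiv ?_]
      · rw [hθ1, mul_zero, sub_zero]
      · apply ContinuousOn.intervalIntegrable
        rw [hUI]
        exact (hKcont.continuousOn).mul
          ((continuousOn_const.mul (hsinb.mul hcosθ)).add
            (continuousOn_const.mul
              ((Real.continuous_sin.comp_continuousOn hθcont2).sub hθcont2)))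
    rw [← h0, hM_def, hS_def, ← intervalIntegral.integral_const_mul,
      ← intervalIntegral.integral_const_mul,
      ← intervalIntegral.integral_add (hint1.const_mul _) (hint2.const_mul _)]
    apply intervalIntegral.integral_congr
    intro s hs
    ring
  -- bound on the cubic error term
  have hS4 : |S| ≤ (C * β) ^ 2 * 4 := by
    have hpt : ∀ x ∈ Set.uIoc t₁ t₂,
        ‖exp (-k * (x - t₁)) * (sin (θ x) - θ x)‖ ≤ (C * β) ^ 2 := by
      intro x hx
      rw [hUIoc] at hx
      have hxI : x ∈ Set.Icc t₁ t₂ := ⟨hx.1.le, hx.2⟩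
      have h1 := hθ2 x hxI
      have h2 : |θ x| ≤ 1 := h1.trans (by linarith)
      have h3 := abs_sin_sub_self_le h2
      rw [Real.norm_eq_abs, abs_mul, abs_of_pos (Real.exp_pos _)]
      have h4 := hKle x hxI.1
      have h5 : |sin (θ x) - θ x| ≤ (C * β) ^ 2 := by
        nlinarith only [h3, h1, sq_abs (θ x), abs_nonneg (θ x)]
      nlinarith only [h4, h5, Real.exp_pos (-k * (x - t₁)),
        abs_nonneg (sin (θ x) - θ x)]
    have h := intervalIntegral.norm_integral_le_of_norm_le_const hpt
    rw [Real.norm_eq_abs] at h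
    refine (hS_def ▸ h).trans ?_
    rw [abs_of_nonneg (by linarith only [ht₂1.le] : (0:ℝ) ≤ t₂ - t₁)]
    nlinarith only [sq_nonneg (C * β), ht₂4, ht₂1.le]
  -- comparison of the main integral with the explicit pulse integral
  have hdiff : |M - ∫ s in t₁..t₂, exp (-k * (s - t₁)) * sin (π * (s - t₁))|
      ≤ ((C * β) ^ 2 + π * (4 * (C * β))) * 4 := by
    have hpt : ∀ x ∈ Set.uIoc t₁ t₂,
        ‖exp (-k * (x - t₁)) * (sin (π * b x) * cos (θ x) ^ 2)
          - exp (-k * (x - t₁)) * sin (π * (x - t₁))‖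
        ≤ (C * β) ^ 2 + π * (4 * (C * β)) := by
      intro x hx
      rw [hUIoc] at hx
      have hxI : x ∈ Set.Icc t₁ t₂ := ⟨hx.1.le, hx.2⟩
      have hθx := hθ2 x hxI
      rw [Real.norm_eq_abs]
      have e1 : exp (-k * (x - t₁)) * (sin (π * b x) * cos (θ x) ^ 2)
          - exp (-k * (x - t₁)) * sin (π * (x - t₁))
          = exp (-k * (x - t₁)) * ((sin (π * b x) * cos (θ x) ^ 2 - sin (π * b x))
            + (sin (π * b x) - sin (π * (x - t₁)))) := by ring
      rw [e1, abs_mul, abs_of_pos (Real.exp_pos _)]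
      have hc1 : |sin (π * b x) * cos (θ x) ^ 2 - sin (π * b x)| ≤ (C * β) ^ 2 := by
        have e2 : sin (π * b x) * cos (θ x) ^ 2 - sin (π * b x)
            = -(sin (π * b x) * sin (θ x) ^ 2) := by
          linear_combination (sin (π * b x)) * (Real.sin_sq_add_cos_sq (θ x))
        rw [e2, abs_neg, abs_mul]
        have hs1 : |sin (π * b x)| ≤ 1 := Real.abs_sin_le_one _
        have hs2 : |sin (θ x) ^ 2| ≤ (C * β) ^ 2 := by
          rw [abs_of_nonneg (sq_nonneg _)]
          nlinarith only [Real.abs_sin_le_abs (x := θ x), abs_nonneg (sin (θ x)),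
            abs_nonneg (θ x), sq_abs (sin (θ x)), sq_abs (θ x), hθx]
        nlinarith only [mul_le_mul hs1 hs2 (abs_nonneg _) (by norm_num : (0:ℝ) ≤ 1)]
      have hc2 : |sin (π * b x) - sin (π * (x - t₁))| ≤ π * (4 * (C * β)) := by
        rw [← sin_pulse (x - t₁)]
        refine (_root_.abs_sin_sub_sin_le _ _).trans ?_
        have e3 : π * b x - π * (-1 - (x - t₁)) = π * (b x + (x - t₁) + 1) := by ring
        rw [e3, abs_mul, abs_of_pos Real.pi_pos]
        have h6 := hfb x (hsub hxI)
        have h7 : C * β * (x - t₁) ≤ 4 * (C * β) := by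
          have h7a : x - t₁ ≤ 4 := by linarith only [hxI.2, ht₂4]
          calc C * β * (x - t₁) ≤ C * β * 4 :=
              mul_le_mul_of_nonneg_left h7a hCβ0.le
            _ = 4 * (C * β) := by ring
        exact mul_le_mul_of_nonneg_left (h6.trans h7) Real.pi_pos.le
      have h8 := (abs_add_le (sin (π * b x) * cos (θ x) ^ 2 - sin (π * b x))
        (sin (π * b x) - sin (π * (x - t₁)))).trans (add_le_add hc1 hc2)
      have h9 := mul_le_mul (hKle x hxI.1) h8 (abs_nonneg _) (by norm_num : (0:ℝ) ≤ 1)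
      simpa using h9
    have hintdiff := intervalIntegral.integral_sub hint1 (hψcont.intervalIntegrable _ _)
    have h := intervalIntegral.norm_integral_le_of_norm_le_const hpt
    rw [Real.norm_eq_abs, hintdiff] at h
    refine (hM_def ▸ h).trans ?_
    rw [abs_of_nonneg (by linarith only [ht₂1.le] : (0:ℝ) ≤ t₂ - t₁)]
    have hpos : (0:ℝ) ≤ (C * β) ^ 2 + π * (4 * (C * β)) := by positivity
    exact mul_le_mul_of_nonneg_left ht₂4 hpos
  -- splitting off the tail of the pulse integral
  have hadj : (∫ s in t₁..t₂, exp (-k * (s - t₁)) * sin (π * (s - t₁)))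
      = (∫ s in t₁..(t₁ + 2), exp (-k * (s - t₁)) * sin (π * (s - t₁)))
        + ∫ s in (t₁ + 2)..t₂, exp (-k * (s - t₁)) * sin (π * (s - t₁)) :=
    (intervalIntegral.integral_add_adjacent_intervals (hψcont.intervalIntegrable _ _)
      (hψcont.intervalIntegrable _ _)).symm
  have htail : |∫ s in (t₁ + 2)..t₂, exp (-k * (s - t₁)) * sin (π * (s - t₁))| ≤ 4 * (C * β) := by
    have hpt : ∀ x ∈ Set.uIoc (t₁ + 2) t₂,
        ‖exp (-k * (x - t₁)) * sin (π * (x - t₁))‖ ≤ 1 := by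
      intro x hx
      have hx1 : t₁ ≤ x := by
        rcases Set.mem_uIoc.mp hx with h | h
        · linarith [h.1]
        · linarith [h.1, ht₂1]
      rw [Real.norm_eq_abs, abs_mul, abs_of_pos (Real.exp_pos _)]
      nlinarith only [mul_le_mul (hKle x hx1) (Real.abs_sin_le_one (π * (x - t₁)))
        (abs_nonneg _) (by norm_num : (0:ℝ) ≤ 1)]
    have h := intervalIntegral.norm_integral_le_of_norm_le_const hpt
    rw [Real.norm_eq_abs] at h
    refine h.trans ?_
    rw [one_mul]
    have e4 : t₂ - (t₁ + 2) = t₂ - t₁ - 2 := by ring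
    rw [e4]
    exact ht₂2
  have hbase := pulse_integral k t₁
  -- lower bound for the main integral
  have hMlow : J / 2 < M := by
    have h1 := (abs_le.mp hdiff).1
    have h2 := (abs_le.mp htail).1
    have h3 : (∫ s in t₁..(t₁ + 2), exp (-k * (s - t₁)) * sin (π * (s - t₁))) = J := by
      rw [hbase, hJ_def]
    have hkey : 4 * (C * β) + ((C * β) ^ 2 + π * (4 * (C * β))) * 4 ≤ β * D := by
      rw [hD_def]
      nlinarith only [mul_nonneg (mul_nonneg (sq_nonneg C) hβ0.le)
        (sub_nonneg.mpr hβ1.le)]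
    have h5 : β * (D + 1) = β * D + β := by ring
    have h4 : (∫ s in t₁..t₂, exp (-k * (s - t₁)) * sin (π * (s - t₁)))
        = J + ∫ s in (t₁ + 2)..t₂, exp (-k * (s - t₁)) * sin (π * (s - t₁)) := by
      rw [hadj, h3]
    linarith only [h1, h2, h4, hkey, h5, hβJ, hβ0]
  -- conclusion : θ is strictly negative at the exit time
  have hcβ : 0 < c * β := mul_pos hc hβ0
  have hθneg : θ t₂ < 0 := by
    have h2 : 16 * k * C ^ 2 * β * β < c * J * β := by
      nlinarith only [mul_lt_mul_of_pos_right hβk hβ0, mul_pos hβ0 hβ0]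
    have h3 : S ≤ (C * β) ^ 2 * 4 := (le_abs_self S).trans hS4
    have h4 : k * S ≤ k * ((C * β) ^ 2 * 4) := mul_le_mul_of_nonneg_left h3 hk.le
    have h5 : c * β * (J / 2) < c * β * M := mul_lt_mul_of_pos_left hMlow hcβ
    have h6 : 0 < c * J * β := by positivity
    have h7 : exp (-k * (t₂ - t₁)) * θ t₂ < 0 := by
      rw [hFTC]
      nlinarith only [h4, h5, h2, h6]
    by_contra hcon
    push_neg at hcon
    linarith only [h7, mul_nonneg (Real.exp_pos (-k * (t₂ - t₁))).le hcon]
  exact ⟨t₂, ht₂1, hbt₂, hθneg⟩
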